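/- For θ ∈ (0,π) and 0 < y < π − θ, the inverse function of f_θ is given by f_θ^{-1}(y) = log(sin y / sin(y + θ)). -/

import Mathlib

open Real Filter

lemma circle_key (θ y : ℝ) :
    Real.sin y ^ 2 + Real.sin (y + θ) ^ 2
      - 2 * Real.sin y * Real.sin (y + θ) * Real.cos θ = Real.sin θ ^ 2 := by
  have h1 : Real.sin (y + θ) = Real.sin y * Real.cos θ + Real.cos y * Real.sin θ :=
    Real.sin_add y θ
  have py := Real.sin_sq_add_cos_sq y
  have pθ := Real.sin_sq_add_cos_sq θ
  rw [h1]
  linear_combination (Real.sin θ ^ 2) * py - (Real.sin y ^ 2) * pθ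

/-- For `θ ∈ (0,π)`, the strictly increasing function
`f_θ : ℝ → (0, π−θ)` with derivative `f_θ'(x) = sin θ/(2(cosh x − cos θ))` and limits
`0` at `−∞`, `π−θ` at `+∞` has inverse `f_θ⁻¹(y) = log(sin y / sin(y + θ))` for
`0 < y < π − θ`. -/
theorem circle_pattern_f_inverse
    (θ : ℝ) (hθ : θ ∈ Set.Ioo 0 Real.pi) (f : ℝ → ℝ)
    (hderiv : ∀ x : ℝ, HasDerivAt f (Real.sin θ / (2 * (Real.cosh x - Real.cos θ))) x)
    (hrange : ∀ x : ℝ, f x ∈ Set.Ioo 0 (Real.pi - θ))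
    (hbot : Tendsto f atBot (nhds 0))
    (htop : Tendsto f atTop (nhds (Real.pi - θ))) :
    ∀ y : ℝ, 0 < y → y < Real.pi - θ →
      f (Real.log (Real.sin y / Real.sin (y + θ))) = y := by
  obtain ⟨hθ0, hθπ⟩ := hθ
  have hSθ : 0 < Real.sin θ := Real.sin_pos_of_pos_of_lt_pi hθ0 hθπ
  set G : ℝ → ℝ := fun t => Real.log (Real.sin t / Real.sin (t + θ)) with hG
  set F : ℝ → ℝ := fun t => f (G t) - t with hF
  -- basic positivity on the interval
  have hs : ∀ t ∈ Set.Ioo (0:ℝ) (Real.pi - θ),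
      0 < Real.sin t ∧ 0 < Real.sin (t + θ) := by
    intro t ht
    constructor
    · exact Real.sin_pos_of_pos_of_lt_pi ht.1 (by linarith [ht.2])
    · exact Real.sin_pos_of_pos_of_lt_pi (by linarith [ht.1]) (by linarith [ht.2])
  -- F has derivative 0 on the interval
  have hFderiv : ∀ t ∈ Set.Ioo (0:ℝ) (Real.pi - θ), HasDerivAt F 0 t := by
    intro t ht
    obtain ⟨h1, h2⟩ := hs t ht
    have hr : 0 < Real.sin t / Real.sin (t + θ) := div_pos h1 h2
    have hq : HasDerivAt (fun u => Real.sin u / Real.sin (u + θ))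
        ((Real.cos t * Real.sin (t + θ) - Real.sin t * Real.cos (t + θ)) /
          Real.sin (t + θ) ^ 2) t := by
      have hd1 : HasDerivAt Real.sin (Real.cos t) t := Real.hasDerivAt_sin t
      have hd2 : HasDerivAt (fun u => Real.sin (u + θ)) (Real.cos (t + θ)) t := by
        have := (Real.hasDerivAt_sin (t + θ)).comp t
          ((hasDerivAt_id t).add_const θ)
        simpa using (mul_one (Real.cos (t + θ))) ▸ this
      exact hd1.div hd2 (ne_of_gt h2)
    have hGd : HasDerivAt G
        (((Real.cos t * Real.sin (t + θ) - Real.sin t * Real.cos (t + θ)) /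
          Real.sin (t + θ) ^ 2) / (Real.sin t / Real.sin (t + θ))) t :=
      hq.log (ne_of_gt hr)
    have hfd := (hderiv (G t)).comp t hGd
    have hFd := hfd.sub (hasDerivAt_id t)
    have hnum : Real.cos t * Real.sin (t + θ) - Real.sin t * Real.cos (t + θ)
        = Real.sin θ := by
      have := Real.sin_sub (t + θ) t
      simpa [mul_comm] using this.symm.trans (by ring_nf)
    have hcosh : Real.cosh (G t) - Real.cos θ
        = Real.sin θ ^ 2 / (2 * Real.sin t * Real.sin (t + θ)) := by
      rw [hG]
      simp only
      rw [Real.cosh_log hr]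
      have key := circle_key θ t
      field_simp
      linear_combination key
    have hval : Real.sin θ / (2 * (Real.cosh (G t) - Real.cos θ)) *
        (((Real.cos t * Real.sin (t + θ) - Real.sin t * Real.cos (t + θ)) /
          Real.sin (t + θ) ^ 2) / (Real.sin t / Real.sin (t + θ))) - 1 = 0 := by
      rw [hnum, hcosh]
      field_simp
      ring
    rw [hval] at hFd
    exact hFd
  -- F is constant on the interval
  intro y hy0 hy1
  have hyI : y ∈ Set.Ioo (0:ℝ) (Real.pi - θ) := ⟨hy0, hy1⟩
  have hconst : ∀ t ∈ Set.Ioo (0:ℝ) y, F t = F y := by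
    intro t ht
    have htI : Set.Icc t y ⊆ Set.Ioo (0:ℝ) (Real.pi - θ) := by
      intro u hu
      exact ⟨lt_of_lt_of_le ht.1 hu.1, lt_of_le_of_lt hu.2 hy1⟩
    have hcont : ContinuousOn F (Set.Icc t y) := fun u hu =>
      (hFderiv u (htI hu)).continuousAt.continuousWithinAt
    obtain ⟨c, hc, hc'⟩ := exists_hasDerivAt_eq_slope F (fun _ => 0) ht.2 hcont
      (fun u hu => hFderiv u (htI (Set.Ioo_subset_Icc_self hu)))
    have : (F y - F t) / (y - t) = 0 := hc'.symm
    have hyt : y - t ≠ 0 := by linarith [ht.2]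
    field_simp at this
    linarith [this]
  -- limit of F at 0⁺ is 0
  have hGbot : Tendsto G (nhdsWithin 0 (Set.Ioi 0)) atBot := by
    have hq : Tendsto (fun t => Real.sin t / Real.sin (t + θ))
        (nhdsWithin 0 (Set.Ioi 0)) (nhdsWithin 0 (Set.Ioi 0)) := by
      rw [tendsto_nhdsWithin_iff]
      constructor
      · have : Tendsto (fun t => Real.sin t / Real.sin (t + θ)) (nhds 0) (nhds 0) := by
          have : ContinuousAt (fun t => Real.sin t / Real.sin (t + θ)) 0 := by
            apply ContinuousAt.div
            · exact Real.continuous_sin.continuousAt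
            · exact (Real.continuous_sin.comp (continuous_id.add continuous_const)).continuousAt
            · simpa using ne_of_gt hSθ
          simpa [Real.sin_zero] using this.tendsto
        exact this.mono_left nhdsWithin_le_nhds
      · have hmem : Set.Ioo (0:ℝ) (Real.pi - θ) ∈ nhdsWithin 0 (Set.Ioi 0) :=
          Ioo_mem_nhdsGT_of_mem ⟨le_refl (0:ℝ), by linarith⟩
        filter_upwards [hmem] with t ht
        obtain ⟨h1, h2⟩ := hs t ht
        exact div_pos h1 h2
    exact Real.tendsto_log_nhdsGT_zero.comp hq
  have hlim0 : Tendsto F (nhdsWithin 0 (Set.Ioi 0)) (nhds 0) := by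
    have h1 : Tendsto (fun t => f (G t)) (nhdsWithin 0 (Set.Ioi 0)) (nhds 0) :=
      hbot.comp hGbot
    have h2 : Tendsto (fun t : ℝ => t) (nhdsWithin 0 (Set.Ioi 0)) (nhds 0) :=
      tendsto_id.mono_left nhdsWithin_le_nhds
    simpa [hF] using h1.sub h2
  have hlimc : Tendsto F (nhdsWithin 0 (Set.Ioi 0)) (nhds (F y)) := by
    have hev : F =ᶠ[nhdsWithin 0 (Set.Ioi 0)] fun _ => F y := by
      filter_upwards [Ioo_mem_nhdsGT_of_mem (Set.mem_Ico.mpr ⟨le_refl (0:ℝ), hy0⟩)]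
        with t ht
      exact hconst t ht
    exact tendsto_const_nhds.congr' hev.symm
  have hFy : F y = 0 := tendsto_nhds_unique hlimc hlim0
  have : f (G y) - y = 0 := hFy
  linarith [this]
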